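/- If s minimizes the cubic model m(s) = f(x) + ∇f(x)ᵀs + ½ sᵀ∇²f(x)s + (σ/6)‖s‖³ with σ > 0, then f(x) − m(s) ≥ (σ/12)‖s‖³. -/

import Mathlib

open scoped RealInnerProductSpace

/-- If s minimizes the cubic model m(s) = f(x) + ∇f(x)ᵀs + ½ sᵀ∇²f(x)s + (σ/6)‖s‖³
with σ > 0, then f(x) − m(s) ≥ (σ/12)‖s‖³. -/
theorem stmt2 {d : ℕ} (f : EuclideanSpace ℝ (Fin d) → ℝ) (hf : ContDiff ℝ 2 f)
    (x : EuclideanSpace ℝ (Fin d)) (σ : ℝ) (hσ : 0 < σ)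
    (m : EuclideanSpace ℝ (Fin d) → ℝ)
    (hm : ∀ t, m t = f x + ⟪gradient f x, t⟫
        + (1 / 2) * ⟪t, fderiv ℝ (gradient f) x t⟫ + σ / 6 * ‖t‖ ^ 3)
    (s : EuclideanSpace ℝ (Fin d)) (hmin : ∀ t, m s ≤ m t) :
    f x - m s ≥ σ / 12 * ‖s‖ ^ 3 := by
  set a := ⟪gradient f x, s⟫ with ha
  set b := ⟪s, fderiv ℝ (gradient f) x s⟫ with hb
  set c := σ / 6 * ‖s‖ ^ 3 with hc
  have hc0 : 0 ≤ c := by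
    rw [hc]; positivity
  have hms : m s = f x + a + b / 2 + c := by
    rw [hm s]; ring
  -- key inequality along the ray through s
  have key : ∀ lam : ℝ, 0 ≤ lam →
      a + b / 2 + c ≤ lam * a + lam ^ 2 * (b / 2) + lam ^ 3 * c := by
    intro lam hl
    have h1 := hmin (lam • s)
    rw [hm s, hm (lam • s)] at h1
    have e1 : ⟪gradient f x, lam • s⟫ = lam * a := by
      rw [real_inner_smul_right]
    have e2 : ⟪lam • s, fderiv ℝ (gradient f) x (lam • s)⟫ = lam ^ 2 * b := by
      rw [map_smul, real_inner_smul_left, real_inner_smul_right]; ring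
    have e3 : ‖lam • s‖ ^ 3 = lam ^ 3 * ‖s‖ ^ 3 := by
      rw [norm_smul, mul_pow, Real.norm_eq_abs, abs_of_nonneg hl]
    rw [e1, e2, e3, show σ / 6 * (lam ^ 3 * ‖s‖ ^ 3) = lam ^ 3 * c by rw [hc]; ring,
      ← ha, ← hb, ← hc] at h1
    linarith
  -- comparing with -s gives a ≤ 0
  have aneg : a ≤ 0 := by
    have h1 := hmin (-s)
    rw [hm s, hm (-s)] at h1
    have e1 : ⟪gradient f x, -s⟫ = -a := by rw [inner_neg_right]
    have e2 : ⟪-s, fderiv ℝ (gradient f) x (-s)⟫ = b := by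
      rw [map_neg, inner_neg_neg]
    have e3 : ‖-s‖ ^ 3 = ‖s‖ ^ 3 := by rw [norm_neg]
    rw [e1, e2, e3, ← ha, ← hb] at h1
    linarith
  -- first-order condition: a + b + 3c = 0
  have hKle : a + b + 3 * c ≤ 0 := by
    have hev : ∀ᶠ ε in nhdsWithin (0:ℝ) (Set.Ioi 0),
        a + b + 3 * c ≤ ε * (b / 2 + 3 * c) := by
      refine Filter.eventually_of_mem (Ioc_mem_nhdsGT_of_mem
        (Set.mem_Ico.mpr ⟨le_refl (0:ℝ), one_pos⟩)) ?_
      intro ε hε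
      obtain ⟨hε0, hε1⟩ := hε
      have h := key (1 - ε) (by linarith)
      nlinarith [mul_nonneg (mul_nonneg hε0.le hε0.le) hc0,
        mul_nonneg (mul_nonneg (mul_nonneg hε0.le hε0.le) hε0.le) hc0]
    have ht : Filter.Tendsto (fun ε : ℝ => ε * (b / 2 + 3 * c))
        (nhdsWithin (0:ℝ) (Set.Ioi 0)) (nhds 0) := by
      have : Filter.Tendsto (fun ε : ℝ => ε * (b / 2 + 3 * c)) (nhds 0) (nhds 0) := by
        have := (continuous_id.mul (continuous_const
          (y := b / 2 + 3 * c))).tendsto (0:ℝ)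
        simpa [Pi.mul_def] using this
      exact this.mono_left nhdsWithin_le_nhds
    exact ge_of_tendsto ht hev
  have hKge : 0 ≤ a + b + 3 * c := by
    have hev : ∀ᶠ ε in nhdsWithin (0:ℝ) (Set.Ioi 0),
        -(ε * (b / 2 + 4 * c)) ≤ a + b + 3 * c := by
      refine Filter.eventually_of_mem (Ioc_mem_nhdsGT_of_mem
        (Set.mem_Ico.mpr ⟨le_refl (0:ℝ), one_pos⟩)) ?_
      intro ε hε
      obtain ⟨hε0, hε1⟩ := hε
      have h := key (1 + ε) (by linarith)
      nlinarith [mul_nonneg (mul_nonneg hε0.le hε0.le) hc0,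
        mul_nonneg (mul_nonneg (mul_nonneg hε0.le hε0.le) hε0.le) hc0,
        mul_nonneg hε0.le hc0]
    have ht : Filter.Tendsto (fun ε : ℝ => -(ε * (b / 2 + 4 * c)))
        (nhdsWithin (0:ℝ) (Set.Ioi 0)) (nhds 0) := by
      have : Filter.Tendsto (fun ε : ℝ => -(ε * (b / 2 + 4 * c))) (nhds 0) (nhds 0) := by
        have := ((continuous_id.mul (continuous_const
          (y := b / 2 + 4 * c))).neg).tendsto (0:ℝ)
        simpa [Pi.mul_def, Pi.neg_def] using this
      exact this.mono_left nhdsWithin_le_nhds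
    exact le_of_tendsto ht hev
  have hK : a + b + 3 * c = 0 := le_antisymm hKle hKge
  have hgoal : σ / 12 * ‖s‖ ^ 3 = c / 2 := by rw [hc]; ring
  rw [hms, hgoal]
  linarith
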